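/- Let Z be a measurable space, μ a probability measure on Z, N ≥ 1 an integer, H a measurable space, and ℓ : H × Z → ℝ a jointly measurable loss with 0 ≤ ℓ(h, z) ≤ M for all h, z, where M > 0. Let A be a Markov kernel from Z^N to H (a measurable assignment of a probability measure A(S) on H to each dataset S ∈ Z^N) that is (ε,δ)-differentially private: for every pair of datasets S, S′ ∈ Z^N that differ in exactly one coordinate and every measurable set B ⊆ H, A(S)(B) ≤ e^ε·A(S′)(B) + δ. Then the on-average generalization error satisfies E_{S ~ μ^{⊗N}} [ ∫_H ( ∫_Z ℓ(h, z) dμ(z) − (1/N)·Σ_{i=1}^N ℓ(h, S_i) ) dA(S)(h) ] ≤ M·δ·e^{−ε} + M·(1 − e^{−ε}). -/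

import Mathlib

set_option maxHeartbeats 1000000

open MeasureTheory ProbabilityTheory Set


private lemma integrable_of_bounds {α : Type*} [MeasurableSpace α] (m : Measure α)
    [IsFiniteMeasure m] {f : α → ℝ} {M : ℝ} (hf : AEStronglyMeasurable f m)
    (h0 : ∀ x, 0 ≤ f x) (hMf : ∀ x, f x ≤ M) : Integrable f m := by
  refine (integrable_const M).mono' hf (Filter.Eventually.of_forall fun x => ?_)
  rw [Real.norm_eq_abs, abs_of_nonneg (h0 x)]
  exact hMf x

private lemma integral_le_of_measure_le {H : Type*} [MeasurableSpace H]
    (ν κ : Measure H) [IsProbabilityMeasure ν] [IsProbabilityMeasure κ]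
    {f : H → ℝ} (hf : Measurable f) {M c d : ℝ} (hM : 0 < M) (hc : 0 ≤ c) (hd : 0 ≤ d)
    (h0 : ∀ h, 0 ≤ f h) (hMf : ∀ h, f h ≤ M)
    (hcomp : ∀ B : Set H, MeasurableSet B → (ν B).toReal ≤ c * (κ B).toReal + d) :
    ∫ h, f h ∂ν ≤ c * ∫ h, f h ∂κ + M * d := by
  -- ENNReal comparison of measures
  have hcomp' : ∀ B : Set H, MeasurableSet B →
      ν B ≤ ENNReal.ofReal c * κ B + ENNReal.ofReal d := by
    intro B hB
    have h1 : ν B = ENNReal.ofReal ((ν B).toReal) := by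
      rw [ENNReal.ofReal_toReal (measure_ne_top _ _)]
    have h2 : κ B = ENNReal.ofReal ((κ B).toReal) := by
      rw [ENNReal.ofReal_toReal (measure_ne_top _ _)]
    rw [h1, h2, ← ENNReal.ofReal_mul hc, ← ENNReal.ofReal_add (by positivity) hd]
    exact ENNReal.ofReal_le_ofReal (hcomp B hB)
  -- layer cake
  have key : ∀ (m : Measure H), ∫⁻ t in Ioi (0:ℝ), m {a | t < f a} =
      ∫⁻ x, ENNReal.ofReal (f x) ∂m := fun m =>
    (lintegral_eq_lintegral_meas_lt m (Filter.Eventually.of_forall h0)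
      hf.aemeasurable).symm
  have hempty : ∀ t : ℝ, M < t → {a | t < f a} = (∅ : Set H) := by
    intro t ht
    ext a; simp only [mem_setOf_eq, mem_empty_iff_false, iff_false, not_lt]
    exact (hMf a).trans ht.le
  have meas_t : ∀ (m : Measure H), Measurable fun t : ℝ => m {a | t < f a} := fun m =>
    Antitone.measurable fun t s hts =>
      measure_mono fun a ha => lt_of_le_of_lt hts ha
  have split : ∀ (m : Measure H), ∫⁻ t in Ioi (0:ℝ), m {a | t < f a} =
      ∫⁻ t in Ioc (0:ℝ) M, m {a | t < f a} := by
    intro m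
    rw [← Ioc_union_Ioi_eq_Ioi hM.le, lintegral_union measurableSet_Ioi Ioc_disjoint_Ioi_same]
    have h0' : ∫⁻ t in Ioi M, m {a | t < f a} = 0 := by
      rw [setLIntegral_congr_fun (g := fun _ => (0:ENNReal)) measurableSet_Ioi
        (fun t ht => by
          simp only [hempty t ht, measure_empty]),
        lintegral_zero]
    rw [h0', add_zero]
  -- main ENNReal bound
  have main : ∫⁻ x, ENNReal.ofReal (f x) ∂ν ≤
      ENNReal.ofReal c * ∫⁻ x, ENNReal.ofReal (f x) ∂κ + ENNReal.ofReal d * ENNReal.ofReal M := by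
    rw [← key ν, split ν]
    calc ∫⁻ t in Ioc (0:ℝ) M, ν {a | t < f a}
        ≤ ∫⁻ t in Ioc (0:ℝ) M, (ENNReal.ofReal c * κ {a | t < f a} + ENNReal.ofReal d) := by
          refine lintegral_mono fun t => ?_
          exact hcomp' _ (measurableSet_lt measurable_const hf)
      _ = ENNReal.ofReal c * (∫⁻ t in Ioc (0:ℝ) M, κ {a | t < f a})
            + ENNReal.ofReal d * volume (Ioc (0:ℝ) M) := by
          rw [lintegral_add_right _ measurable_const, lintegral_const,
            lintegral_const_mul _ (meas_t κ), Measure.restrict_apply_univ]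
      _ ≤ ENNReal.ofReal c * ∫⁻ x, ENNReal.ofReal (f x) ∂κ + ENNReal.ofReal d * ENNReal.ofReal M := by
          rw [← key κ, split κ, Real.volume_Ioc, sub_zero]
  -- convert to real integrals
  have hνint : Integrable f ν := integrable_of_bounds ν hf.aestronglyMeasurable h0 hMf
  have hκint : Integrable f κ := integrable_of_bounds κ hf.aestronglyMeasurable h0 hMf
  have eν : ∫ h, f h ∂ν = (∫⁻ x, ENNReal.ofReal (f x) ∂ν).toReal :=
    integral_eq_lintegral_of_nonneg_ae (Filter.Eventually.of_forall h0) hf.aestronglyMeasurable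
  have eκ : ∫ h, f h ∂κ = (∫⁻ x, ENNReal.ofReal (f x) ∂κ).toReal :=
    integral_eq_lintegral_of_nonneg_ae (Filter.Eventually.of_forall h0) hf.aestronglyMeasurable
  have hκfin : ∫⁻ x, ENNReal.ofReal (f x) ∂κ ≠ ⊤ := hκint.lintegral_lt_top.ne
  have hrhsfin : ENNReal.ofReal c * ∫⁻ x, ENNReal.ofReal (f x) ∂κ
      + ENNReal.ofReal d * ENNReal.ofReal M ≠ ⊤ := by
    apply ENNReal.add_ne_top.mpr
    exact ⟨ENNReal.mul_ne_top ENNReal.ofReal_ne_top hκfin,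
      ENNReal.mul_ne_top ENNReal.ofReal_ne_top ENNReal.ofReal_ne_top⟩
  rw [eν, eκ]
  calc (∫⁻ x, ENNReal.ofReal (f x) ∂ν).toReal
      ≤ (ENNReal.ofReal c * ∫⁻ x, ENNReal.ofReal (f x) ∂κ
          + ENNReal.ofReal d * ENNReal.ofReal M).toReal :=
        ENNReal.toReal_mono hrhsfin main
    _ = c * (∫⁻ x, ENNReal.ofReal (f x) ∂κ).toReal + M * d := by
        rw [ENNReal.toReal_add (ENNReal.mul_ne_top ENNReal.ofReal_ne_top hκfin)
          (ENNReal.mul_ne_top ENNReal.ofReal_ne_top ENNReal.ofReal_ne_top),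
          ENNReal.toReal_mul, ENNReal.toReal_mul, ENNReal.toReal_ofReal hc,
          ENNReal.toReal_ofReal hd, ENNReal.toReal_ofReal hM.le]
        ring


private lemma exists_update_swap_equiv {Z : Type*} [MeasurableSpace Z]
    (μ : Measure Z) [IsProbabilityMeasure μ] {n : ℕ} (i : Fin (n + 1)) :
    ∃ e : ((Fin (n + 1) → Z) × Z) ≃ᵐ ((Fin (n + 1) → Z) × Z),
      MeasurePreserving e ((Measure.pi fun _ : Fin (n + 1) => μ).prod μ)
        ((Measure.pi fun _ : Fin (n + 1) => μ).prod μ) ∧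
      ∀ p : (Fin (n + 1) → Z) × Z, e p = (Function.update p.1 i p.2, p.1 i) := by
  classical
  set P := (Measure.pi fun _ : Fin (n + 1) => μ) with hP
  set R := Fin n → Z with hR
  set ν : Measure R := Measure.pi fun _ => μ with hν
  let e2 : (Fin (n + 1) → Z) ≃ᵐ Z × R :=
    MeasurableEquiv.piFinSuccAbove (fun _ => Z) i
  have m2 : MeasurePreserving e2 P (μ.prod ν) :=
    measurePreserving_piFinSuccAbove (fun _ : Fin (n + 1) => μ) i
  let Φ : ((Fin (n + 1) → Z) × Z) ≃ᵐ ((Z × R) × Z) := e2.prodCongr (MeasurableEquiv.refl Z)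
  have mΦ : MeasurePreserving Φ (P.prod μ) ((μ.prod ν).prod μ) := by
    have := m2.prod (MeasurePreserving.id μ)
    exact this
  let σ : ((Z × R) × Z) ≃ᵐ ((Z × R) × Z) :=
    MeasurableEquiv.prodAssoc.trans
      (((MeasurableEquiv.refl Z).prodCongr MeasurableEquiv.prodComm).trans
        MeasurableEquiv.prodComm)
  have mσ : MeasurePreserving σ ((μ.prod ν).prod μ) ((μ.prod ν).prod μ) := by
    have h1 := MeasureTheory.measurePreserving_prodAssoc μ ν μ
    have h2 := (MeasurePreserving.id μ).prod
      (Measure.measurePreserving_swap (μ := ν) (ν := μ))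
    have h3 := Measure.measurePreserving_swap (μ := μ) (ν := μ.prod ν)
    exact (h3.comp h2).comp h1
  refine ⟨Φ.trans (σ.trans Φ.symm), ?_, ?_⟩
  · have := (mΦ.symm Φ).comp (mσ.comp mΦ)
    exact this
  · rintro ⟨S, z⟩
    have key : Φ ((Function.update S i z, S i)) = σ (Φ (S, z)) := by
      have lhs : Φ ((Function.update S i z, S i))
          = (((Function.update S i z) i, fun j : Fin n => Function.update S i z (i.succAbove j)),
              S i) := rfl
      have rhs : σ (Φ (S, z)) = ((z, fun j : Fin n => S (i.succAbove j)), S i) := rfl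
      rw [lhs, rhs]
      refine Prod.ext (Prod.ext ?_ ?_) rfl
      · exact Function.update_self i z S
      · funext j
        exact Function.update_of_ne (i.succAbove_ne j) z S
    calc (Φ.trans (σ.trans Φ.symm)) (S, z) = Φ.symm (σ (Φ (S, z))) := rfl
      _ = Φ.symm (Φ (Function.update S i z, S i)) := by rw [key]
      _ = (Function.update S i z, S i) := Φ.symm_apply_apply _

private lemma dp_pointwise {Z : Type*} [MeasurableSpace Z] {N : ℕ}
    {H : Type*} [MeasurableSpace H]
    (ℓ : H → Z → ℝ) (hℓ : Measurable fun p : H × Z => ℓ p.1 p.2)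
    (M : ℝ) (hM : 0 < M)
    (hℓ0 : ∀ h z, 0 ≤ ℓ h z) (hℓM : ∀ h z, ℓ h z ≤ M)
    (A : Kernel (Fin N → Z) H) [IsMarkovKernel A]
    (ε δ : ℝ) (hε : 0 ≤ ε) (hδ : 0 ≤ δ)
    (hdp : ∀ S S' : Fin N → Z,
      (∃ j : Fin N, S j ≠ S' j ∧ ∀ i : Fin N, i ≠ j → S i = S' i) →
      ∀ B : Set H, MeasurableSet B →
        A S B ≤ ENNReal.ofReal (Real.exp ε) * A S' B + ENNReal.ofReal δ)
    (S : Fin N → Z) (z : Z) (i : Fin N) :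
    ∫ h, ℓ h z ∂(A S) - ∫ h, ℓ h z ∂(A (Function.update S i z))
      ≤ M * δ * Real.exp (-ε) + M * (1 - Real.exp (-ε)) := by
  classical
  have hexp1 : Real.exp (-ε) ≤ 1 := Real.exp_le_one_iff.mpr (by linarith)
  have hexp0 : 0 < Real.exp (-ε) := Real.exp_pos _
  have hK : 0 ≤ M * δ * Real.exp (-ε) + M * (1 - Real.exp (-ε)) := by
    have : 0 ≤ M * δ * Real.exp (-ε) := by positivity
    nlinarith
  by_cases hz : z = S i
  · rw [hz, Function.update_eq_self]
    simpa using hK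
  · set T := Function.update S i z with hT
    have hpair : ∃ j : Fin N, T j ≠ S j ∧ ∀ k : Fin N, k ≠ j → T k = S k := by
      refine ⟨i, ?_, fun k hk => Function.update_of_ne hk z S⟩
      rw [hT, Function.update_self]; exact hz
    have hfmeas : Measurable fun h => ℓ h z := hℓ.comp (measurable_id.prodMk measurable_const)
    have hprod : Real.exp (-ε) * Real.exp ε = 1 := by
      rw [← Real.exp_add]; simp
    have hcomp : ∀ B : Set H, MeasurableSet B →
        ((A S) B).toReal ≤ Real.exp (-ε) * ((A T) B).toReal
          + (1 - Real.exp (-ε) + δ * Real.exp (-ε)) := by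
      intro B hB
      have hdpB := hdp T S hpair Bᶜ hB.compl
      have hfin : ENNReal.ofReal (Real.exp ε) * (A S) Bᶜ + ENNReal.ofReal δ ≠ ⊤ :=
        ENNReal.add_ne_top.mpr ⟨ENNReal.mul_ne_top ENNReal.ofReal_ne_top (measure_ne_top _ _),
          ENNReal.ofReal_ne_top⟩
      have hreal := ENNReal.toReal_mono hfin hdpB
      rw [ENNReal.toReal_add (ENNReal.mul_ne_top ENNReal.ofReal_ne_top (measure_ne_top _ _))
        ENNReal.ofReal_ne_top, ENNReal.toReal_mul, ENNReal.toReal_ofReal (Real.exp_pos ε).le,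
        ENNReal.toReal_ofReal hδ] at hreal
      have hc1 : ((A T) Bᶜ).toReal = 1 - ((A T) B).toReal := by
        rw [measure_compl hB (measure_ne_top _ _), measure_univ,
          ENNReal.toReal_sub_of_le prob_le_one ENNReal.one_ne_top, ENNReal.toReal_one]
      have hc2 : ((A S) Bᶜ).toReal = 1 - ((A S) B).toReal := by
        rw [measure_compl hB (measure_ne_top _ _), measure_univ,
          ENNReal.toReal_sub_of_le prob_le_one ENNReal.one_ne_top, ENNReal.toReal_one]
      rw [hc1, hc2] at hreal
      have h2 := mul_le_mul_of_nonneg_left hreal hexp0.le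
      have h3 : Real.exp (-ε) * (Real.exp ε * (1 - ((A S) B).toReal) + δ)
          = (1 - ((A S) B).toReal) + δ * Real.exp (-ε) := by
        rw [mul_add, ← mul_assoc, hprod, one_mul]
        ring
      linarith [h2.trans_eq h3]
    have hmain := integral_le_of_measure_le (A S) (A T) hfmeas hM hexp0.le
      (by nlinarith : (0:ℝ) ≤ 1 - Real.exp (-ε) + δ * Real.exp (-ε))
      (fun h => hℓ0 h z) (fun h => hℓM h z) hcomp
    have hTnn : 0 ≤ ∫ h, ℓ h z ∂(A T) := integral_nonneg fun h => hℓ0 h z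
    have hTM : ∫ h, ℓ h z ∂(A T) ≤ M := by
      calc ∫ h, ℓ h z ∂(A T) ≤ ∫ _, M ∂(A T) := by
            refine integral_mono (integrable_of_bounds _ hfmeas.aestronglyMeasurable
              (fun h => hℓ0 h z) (fun h => hℓM h z)) (integrable_const M) fun h => hℓM h z
        _ = M := by simp
    nlinarith [hmain, hTnn, hTM]

/-- On-average generalization bound via differential privacy: an (ε,δ)-differentially
private Markov kernel from datasets of size N to hypotheses, with loss bounded in
[0, M], has on-average generalization error at most M·δ·e^{−ε} + M·(1 − e^{−ε}). -/
theorem on_average_generalization_via_dp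
    {Z : Type*} [MeasurableSpace Z] (μ : Measure Z) [IsProbabilityMeasure μ]
    (N : ℕ) (hN : 1 ≤ N)
    {H : Type*} [MeasurableSpace H]
    (ℓ : H → Z → ℝ) (hℓ : Measurable fun p : H × Z => ℓ p.1 p.2)
    (M : ℝ) (hM : 0 < M)
    (hℓ0 : ∀ h z, 0 ≤ ℓ h z) (hℓM : ∀ h z, ℓ h z ≤ M)
    (A : Kernel (Fin N → Z) H) [IsMarkovKernel A]
    (ε δ : ℝ) (hε : 0 ≤ ε) (hδ : 0 ≤ δ)
    (hdp : ∀ S S' : Fin N → Z,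
      (∃ j : Fin N, S j ≠ S' j ∧ ∀ i : Fin N, i ≠ j → S i = S' i) →
      ∀ B : Set H, MeasurableSet B →
        A S B ≤ ENNReal.ofReal (Real.exp ε) * A S' B + ENNReal.ofReal δ) :
    ∫ S, (∫ h, ((∫ z, ℓ h z ∂μ) - (1 / (N : ℝ)) * ∑ i : Fin N, ℓ h (S i)) ∂(A S))
        ∂(Measure.pi fun _ : Fin N => μ)
      ≤ M * δ * Real.exp (-ε) + M * (1 - Real.exp (-ε)) := by
  classical
  obtain ⟨n, rfl⟩ : ∃ n, N = n + 1 := ⟨N - 1, by omega⟩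
  set K : ℝ := M * δ * Real.exp (-ε) + M * (1 - Real.exp (-ε)) with hKdef
  set P : Measure (Fin (n + 1) → Z) := Measure.pi fun _ => μ with hPdef
  set P' : Measure ((Fin (n + 1) → Z) × Z) := P.prod μ with hP'def
  set c0 : ℝ := 1 / ((n + 1 : ℕ) : ℝ) with hc0def
  have hc0pos : 0 < c0 := by
    rw [hc0def]; positivity
  -- basic measurability of slices
  have hfz : ∀ z : Z, Measurable fun h => ℓ h z := fun z =>
    hℓ.comp (measurable_id.prodMk measurable_const)
  have hfh : ∀ h : H, Measurable fun z => ℓ h z := fun h =>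
    hℓ.comp (measurable_const.prodMk measurable_id)
  -- the expected risk
  have hRsm : StronglyMeasurable fun h => ∫ z, ℓ h z ∂μ :=
    hℓ.stronglyMeasurable.integral_prod_right'
  have hR0 : ∀ h, 0 ≤ ∫ z, ℓ h z ∂μ := fun h => integral_nonneg fun z => hℓ0 h z
  have hRM : ∀ h, ∫ z, ℓ h z ∂μ ≤ M := fun h => by
    calc ∫ z, ℓ h z ∂μ ≤ ∫ _, M ∂μ :=
          integral_mono (integrable_of_bounds μ (hfh h).aestronglyMeasurable (hℓ0 h) (hℓM h))
            (integrable_const M) (hℓM h)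
      _ = M := by simp
  -- the key function G
  set G : (Fin (n + 1) → Z) × Z → ℝ := fun q => ∫ h, ℓ h q.2 ∂(A q.1) with hGdef
  have hGsm : StronglyMeasurable G := by
    have hf : StronglyMeasurable fun r : ((Fin (n + 1) → Z) × Z) × H => ℓ r.2 r.1.2 :=
      (hℓ.comp (measurable_snd.prodMk (measurable_snd.comp measurable_fst))).stronglyMeasurable
    have := hf.integral_kernel_prod_right' (κ := A.comap Prod.fst measurable_fst)
    exact this
  have hG0 : ∀ q, 0 ≤ G q := fun q => integral_nonneg fun h => hℓ0 h q.2
  have hGM : ∀ q, G q ≤ M := fun q => by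
    calc G q ≤ ∫ _, M ∂(A q.1) :=
          integral_mono (integrable_of_bounds _ (hfz q.2).aestronglyMeasurable
            (fun h => hℓ0 h q.2) (fun h => hℓM h q.2)) (integrable_const M)
            (fun h => hℓM h q.2)
      _ = M := by simp
  -- F1 and F2
  set F1 : (Fin (n + 1) → Z) → ℝ := fun S => ∫ h, (∫ z, ℓ h z ∂μ) ∂(A S) with hF1def
  have hF1sm : StronglyMeasurable F1 :=
    (hRsm.comp_measurable measurable_snd).integral_kernel_prod_right' (κ := A)
  have hF10 : ∀ S, 0 ≤ F1 S := fun S => integral_nonneg fun h => hR0 h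
  have hF1M : ∀ S, F1 S ≤ M := fun S => by
    calc F1 S ≤ ∫ _, M ∂(A S) :=
          integral_mono (integrable_of_bounds _ hRsm.aestronglyMeasurable hR0 hRM)
            (integrable_const M) hRM
      _ = M := by simp
  set F2 : Fin (n + 1) → (Fin (n + 1) → Z) → ℝ := fun i S => G (S, S i) with hF2def
  have hF2sm : ∀ i, StronglyMeasurable (F2 i) := fun i =>
    hGsm.comp_measurable (measurable_id.prodMk (measurable_pi_apply i))
  have hF20 : ∀ i S, 0 ≤ F2 i S := fun i S => hG0 _
  have hF2M : ∀ i S, F2 i S ≤ M := fun i S => hGM _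
  -- W
  have hψmeas : ∀ i : Fin (n + 1),
      Measurable fun q : (Fin (n + 1) → Z) × Z => Function.update q.1 i q.2 := by
    intro i
    apply measurable_pi_lambda
    intro j
    by_cases hj : j = i
    · subst hj
      simp only [Function.update_self]
      exact measurable_snd
    · simp only [Function.update_of_ne hj]
      exact (measurable_pi_apply j).comp measurable_fst
  set W : Fin (n + 1) → ((Fin (n + 1) → Z) × Z) → ℝ :=
    fun i q => G (Function.update q.1 i q.2, q.2) with hWdef
  have hWsm : ∀ i, StronglyMeasurable (W i) := fun i =>
    hGsm.comp_measurable ((hψmeas i).prodMk measurable_snd)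
  have hW0 : ∀ i q, 0 ≤ W i q := fun i q => hG0 _
  have hWM : ∀ i q, W i q ≤ M := fun i q => hGM _
  -- integrabilities
  have hGint : Integrable G P' := integrable_of_bounds _ hGsm.aestronglyMeasurable hG0 hGM
  have hWint : ∀ i, Integrable (W i) P' := fun i =>
    integrable_of_bounds _ (hWsm i).aestronglyMeasurable (hW0 i) (hWM i)
  have hF1int : Integrable F1 P := integrable_of_bounds _ hF1sm.aestronglyMeasurable hF10 hF1M
  have hF2int : ∀ i, Integrable (F2 i) P := fun i =>
    integrable_of_bounds _ (hF2sm i).aestronglyMeasurable (hF20 i) (hF2M i)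
  -- Step A : rewrite the inner integral
  have inner : ∀ S : Fin (n + 1) → Z,
      ∫ h, ((∫ z, ℓ h z ∂μ) - c0 * ∑ i : Fin (n + 1), ℓ h (S i)) ∂(A S)
        = F1 S - c0 * ∑ i : Fin (n + 1), F2 i S := by
    intro S
    have int1 : Integrable (fun h => ∫ z, ℓ h z ∂μ) (A S) :=
      integrable_of_bounds _ hRsm.aestronglyMeasurable hR0 hRM
    have intℓ : ∀ i : Fin (n + 1), Integrable (fun h => ℓ h (S i)) (A S) := fun i =>
      integrable_of_bounds _ (hfz (S i)).aestronglyMeasurable (fun h => hℓ0 h (S i))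
        (fun h => hℓM h (S i))
    have int2 : Integrable (fun h => c0 * ∑ i : Fin (n + 1), ℓ h (S i)) (A S) :=
      (integrable_finset_sum Finset.univ fun i _ => intℓ i).const_mul c0
    rw [integral_sub int1 int2, integral_const_mul,
      integral_finset_sum Finset.univ fun i _ => intℓ i]
  -- Step A' : outer splitting
  have stepA : ∫ S, (∫ h, ((∫ z, ℓ h z ∂μ) - c0 * ∑ i : Fin (n + 1), ℓ h (S i)) ∂(A S)) ∂P
      = (∫ S, F1 S ∂P) - c0 * ∑ i : Fin (n + 1), ∫ S, F2 i S ∂P := by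
    rw [integral_congr_ae (Filter.Eventually.of_forall inner)]
    have int2 : Integrable (fun S => c0 * ∑ i : Fin (n + 1), F2 i S) P :=
      (integrable_finset_sum Finset.univ fun i _ => hF2int i).const_mul c0
    rw [integral_sub hF1int int2, integral_const_mul,
      integral_finset_sum Finset.univ fun i _ => hF2int i]
  -- Step B : F1 integral as integral of G over the product
  have stepB : ∫ S, F1 S ∂P = ∫ q, G q ∂P' := by
    rw [hP'def, integral_prod _ hGint]
    refine integral_congr_ae (Filter.Eventually.of_forall fun S => ?_)
    have hint : Integrable (fun p : H × Z => ℓ p.1 p.2) ((A S).prod μ) :=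
      integrable_of_bounds _ hℓ.aestronglyMeasurable (fun p => hℓ0 p.1 p.2)
        (fun p => hℓM p.1 p.2)
    exact integral_integral_swap hint
  -- Step C : F2 integral as integral of W over the product
  have stepC : ∀ i, ∫ S, F2 i S ∂P = ∫ q, W i q ∂P' := by
    intro i
    obtain ⟨e, me, he⟩ := exists_update_swap_equiv μ i
    have h1 : ∫ S, F2 i S ∂P = ∫ q, F2 i q.1 ∂P' := by
      have hmap : P'.map Prod.fst = P := by
        rw [hP'def, Measure.map_fst_prod, measure_univ, one_smul]
      rw [← hmap]
      exact integral_map measurable_fst.aemeasurable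
        (by rw [hmap]; exact (hF2sm i).aestronglyMeasurable)
    have h2 : ∫ q, F2 i q.1 ∂P' = ∫ q, F2 i (e q).1 ∂P' :=
      (me.integral_comp e.measurableEmbedding (fun q => F2 i q.1)).symm
    have h3 : ∫ q, F2 i (e q).1 ∂P' = ∫ q, W i q ∂P' := by
      refine integral_congr_ae (Filter.Eventually.of_forall fun q => ?_)
      simp only [he q, hF2def, hWdef, hGdef, Function.update_self]
    rw [h1, h2, h3]
  -- Step D : pointwise bound and conclusion
  have hterm : ∀ i : Fin (n + 1), (∫ q, G q ∂P') - ∫ q, W i q ∂P' ≤ K := by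
    intro i
    rw [← integral_sub hGint (hWint i)]
    calc ∫ q, (G q - W i q) ∂P' ≤ ∫ _, K ∂P' := by
          refine integral_mono (hGint.sub (hWint i)) (integrable_const K) fun q => ?_
          exact dp_pointwise ℓ hℓ M hM hℓ0 hℓM A ε δ hε hδ hdp q.1 q.2 i
      _ = K := by simp
  have hcard : ((Finset.univ : Finset (Fin (n + 1))).card : ℝ) = ((n + 1 : ℕ) : ℝ) := by
    simp
  have hc0mul : c0 * ((n + 1 : ℕ) : ℝ) = 1 := by
    rw [hc0def]
    field_simp
  calc ∫ S, (∫ h, ((∫ z, ℓ h z ∂μ) - c0 * ∑ i : Fin (n + 1), ℓ h (S i)) ∂(A S)) ∂P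
      = (∫ q, G q ∂P') - c0 * ∑ i : Fin (n + 1), ∫ q, W i q ∂P' := by
        rw [stepA, stepB]
        congr 1
        rw [Finset.mul_sum, Finset.mul_sum]
        exact Finset.sum_congr rfl fun i _ => by rw [stepC i]
    _ = c0 * ∑ i : Fin (n + 1), ((∫ q, G q ∂P') - ∫ q, W i q ∂P') := by
        rw [Finset.sum_sub_distrib, Finset.sum_const, Finset.card_univ, Fintype.card_fin,
          mul_sub]
        rw [nsmul_eq_mul]
        have : c0 * (((n + 1 : ℕ) : ℝ) * ∫ q, G q ∂P') = ∫ q, G q ∂P' := by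
          rw [← mul_assoc, hc0mul, one_mul]
        rw [this]
    _ ≤ c0 * ∑ i : Fin (n + 1), K := by
        refine mul_le_mul_of_nonneg_left (Finset.sum_le_sum fun i _ => hterm i) hc0pos.le
    _ = K := by
        rw [Finset.sum_const, Finset.card_univ, Fintype.card_fin, nsmul_eq_mul, ← mul_assoc,
          hc0mul, one_mul]
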